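/- Assume ‖P_Ω P_T‖ ≤ 1/2, so that P_T P_{Ω⊥} P_T restricted to T is invertible. Then for any matrix M ∈ ℝ^{n×n}, the pair (L_oracle, S_oracle) with L_oracle = (P_T P_{Ω⊥} P_T)^{-1} P_T P_{Ω⊥}(M) (the inverse taken of the restriction to T) and S_oracle = P_Ω(M − L_oracle) is an optimal solution of the least squares problem: minimize ‖M − L − S‖_F over all L ∈ T and all S supported on Ω. -/

import Mathlib

open Matrix BigOperators

noncomputable def frobNorm {m k : ℕ} (A : Matrix (Fin m) (Fin k) ℝ) : ℝ :=
  Real.sqrt (∑ i, ∑ j, (A i j) ^ 2)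

noncomputable def nuclearNorm {m k : ℕ} (A : Matrix (Fin m) (Fin k) ℝ) : ℝ :=
  ∑ i, Real.sqrt ((show (Aᵀ * A).IsHermitian from Matrix.isHermitian_iff_isSymm.mpr
    (by simp [Matrix.IsSymm, Matrix.transpose_mul])).eigenvalues i)

def l1Norm {m k : ℕ} (A : Matrix (Fin m) (Fin k) ℝ) : ℝ :=
  ∑ i, ∑ j, |A i j|

noncomputable def linfNorm {m k : ℕ} (A : Matrix (Fin m) (Fin k) ℝ) : ℝ :=
  ⨆ i, ⨆ j, |A i j|

noncomputable def specNorm {m k : ℕ} (A : Matrix (Fin m) (Fin k) ℝ) : ℝ :=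
  ‖LinearMap.toContinuousLinearMap (Matrix.toEuclideanLin A)‖

def finner {m k : ℕ} (A B : Matrix (Fin m) (Fin k) ℝ) : ℝ :=
  ∑ i, ∑ j, A i j * B i j

noncomputable def projSet {n : ℕ} (Ω : Set (Fin n × Fin n)) (S : Matrix (Fin n) (Fin n) ℝ) :
    Matrix (Fin n) (Fin n) ℝ :=
  fun i j => Ω.indicator (fun p => S p.1 p.2) (i, j)

def suppSet {n : ℕ} (S : Matrix (Fin n) (Fin n) ℝ) : Set (Fin n × Fin n) :=
  {p | S p.1 p.2 ≠ 0}

noncomputable def sgnMat {n : ℕ} (S : Matrix (Fin n) (Fin n) ℝ) : Matrix (Fin n) (Fin n) ℝ :=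
  fun i j => Real.sign (S i j)

def Tspace {n r : ℕ} (U V : Matrix (Fin n) (Fin r) ℝ) : Set (Matrix (Fin n) (Fin n) ℝ) :=
  {X | ∃ Q R : Matrix (Fin n) (Fin r) ℝ, X = U * Qᵀ + R * Vᵀ}

def IsOrthProjOnto {n : ℕ} (P : Matrix (Fin n) (Fin n) ℝ →ₗ[ℝ] Matrix (Fin n) (Fin n) ℝ)
    (T : Set (Matrix (Fin n) (Fin n) ℝ)) : Prop :=
  (∀ X, P X ∈ T) ∧ (∀ X ∈ T, P X = X) ∧ (∀ X Y, Y ∈ T → finner (X - P X) Y = 0)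

noncomputable def pairFrob {n : ℕ} (X : Matrix (Fin n) (Fin n) ℝ × Matrix (Fin n) (Fin n) ℝ) : ℝ :=
  Real.sqrt (frobNorm X.1 ^ 2 + frobNorm X.2 ^ 2)

noncomputable def projGamma {n : ℕ} (X : Matrix (Fin n) (Fin n) ℝ × Matrix (Fin n) (Fin n) ℝ) :
    Matrix (Fin n) (Fin n) ℝ × Matrix (Fin n) (Fin n) ℝ :=
  ((1/2 : ℝ) • (X.1 + X.2), (1/2 : ℝ) • (X.1 + X.2))

open scoped Classical

noncomputable def suppFinset {n : ℕ} (S : Matrix (Fin n) (Fin n) ℝ) : Finset (Fin n × Fin n) :=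
  Finset.univ.filter (fun p => S p.1 p.2 ≠ 0)

section helpers

variable {n : ℕ}

lemma projSet_apply (Ω : Set (Fin n × Fin n)) (X : Matrix (Fin n) (Fin n) ℝ) (i j : Fin n) :
    projSet Ω X i j = if (i, j) ∈ Ω then X i j else 0 := by
  simp [projSet, Set.indicator_apply]

lemma projSet_add (Ω : Set (Fin n × Fin n)) (X Y : Matrix (Fin n) (Fin n) ℝ) :
    projSet Ω (X + Y) = projSet Ω X + projSet Ω Y := by
  funext i j
  simp only [projSet_apply, Matrix.add_apply]
  split <;> simp

lemma projSet_smul (Ω : Set (Fin n × Fin n)) (c : ℝ) (X : Matrix (Fin n) (Fin n) ℝ) :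
    projSet Ω (c • X) = c • projSet Ω X := by
  funext i j
  simp only [projSet_apply, Matrix.smul_apply, smul_eq_mul]
  split <;> simp

lemma projSet_sub (Ω : Set (Fin n × Fin n)) (X Y : Matrix (Fin n) (Fin n) ℝ) :
    projSet Ω (X - Y) = projSet Ω X - projSet Ω Y := by
  funext i j
  simp only [projSet_apply, Matrix.sub_apply]
  split <;> simp

lemma projSet_idem (Ω : Set (Fin n × Fin n)) (X : Matrix (Fin n) (Fin n) ℝ) :
    projSet Ω (projSet Ω X) = projSet Ω X := by
  funext i j
  simp only [projSet_apply]
  split <;> simp_all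

lemma finner_zero_left {m k : ℕ} (B : Matrix (Fin m) (Fin k) ℝ) : finner 0 B = 0 := by
  simp [finner]

lemma finner_sub_left {m k : ℕ} (A B C : Matrix (Fin m) (Fin k) ℝ) :
    finner (A - B) C = finner A C - finner B C := by
  simp [finner, Matrix.sub_apply, sub_mul, Finset.sum_sub_distrib]

lemma finner_add_left {m k : ℕ} (A B C : Matrix (Fin m) (Fin k) ℝ) :
    finner (A + B) C = finner A C + finner B C := by
  simp [finner, Matrix.add_apply, add_mul, Finset.sum_add_distrib]

lemma finner_comm {m k : ℕ} (A B : Matrix (Fin m) (Fin k) ℝ) : finner A B = finner B A := by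
  simp [finner, mul_comm]

lemma finner_self_nonneg {m k : ℕ} (A : Matrix (Fin m) (Fin k) ℝ) : 0 ≤ finner A A := by
  apply Finset.sum_nonneg; intro i _
  apply Finset.sum_nonneg; intro j _
  exact mul_self_nonneg _

lemma frobNorm_eq {m k : ℕ} (A : Matrix (Fin m) (Fin k) ℝ) :
    frobNorm A = Real.sqrt (finner A A) := by
  simp [frobNorm, finner, pow_two]

lemma eq_zero_of_finner_self {m k : ℕ} (A : Matrix (Fin m) (Fin k) ℝ)
    (h : finner A A = 0) : A = 0 := by
  unfold finner at h
  have h1 : ∀ i ∈ Finset.univ, ∑ j, A i j * A i j = 0 := by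
    rw [Finset.sum_eq_zero_iff_of_nonneg] at h
    · exact h
    · intro i _; apply Finset.sum_nonneg; intro j _; exact mul_self_nonneg _
  funext i j
  have h2 := h1 i (Finset.mem_univ i)
  rw [Finset.sum_eq_zero_iff_of_nonneg (fun j _ => mul_self_nonneg _)] at h2
  have := h2 j (Finset.mem_univ j)
  simpa [mul_self_eq_zero] using this

lemma projSet_adj (Ω : Set (Fin n × Fin n)) (X Y : Matrix (Fin n) (Fin n) ℝ) :
    finner (projSet Ω X) Y = finner X (projSet Ω Y) := by
  unfold finner
  apply Finset.sum_congr rfl; intro i _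
  apply Finset.sum_congr rfl; intro j _
  rw [projSet_apply, projSet_apply]
  split <;> simp

lemma finner_expand {m k : ℕ} (A B : Matrix (Fin m) (Fin k) ℝ) :
    finner (A + B) (A + B) = finner A A + 2 * finner A B + finner B B := by
  rw [finner_add_left, finner_comm A (A + B), finner_comm B (A + B),
    finner_add_left, finner_add_left, finner_comm B A]
  ring

end helpers

/-- the oracle least-squares solution.
Assume ‖P_Ω P_T‖ ≤ 1/2, so P_T P_{Ω⊥} P_T restricted to T is invertible. For any M,
the matrix L_oracle = (P_T P_{Ω⊥} P_T)⁻¹ P_T P_{Ω⊥}(M) — i.e. the (unique) element of T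
satisfying the normal equation P_T P_{Ω⊥} P_T (L_oracle) = P_T P_{Ω⊥}(M) — together with
S_oracle = P_Ω(M − L_oracle), is an optimal solution of
min ‖M − L − S‖_F over L ∈ T and S supported on Ω. -/
theorem stmt12 {n : ℕ} (T : Submodule ℝ (Matrix (Fin n) (Fin n) ℝ))
    (PT : Matrix (Fin n) (Fin n) ℝ →ₗ[ℝ] Matrix (Fin n) (Fin n) ℝ)
    (hPT : IsOrthProjOnto PT (T : Set (Matrix (Fin n) (Fin n) ℝ)))
    (Ω : Set (Fin n × Fin n))
    -- ‖P_Ω P_T‖ ≤ 1/2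
    (hop : ∀ X : Matrix (Fin n) (Fin n) ℝ,
      frobNorm (projSet Ω (PT X)) ≤ (1 / 2) * frobNorm X)
    (M : Matrix (Fin n) (Fin n) ℝ) :
    -- L_oracle exists (the restricted operator is invertible) ...
    (∃ Lor, Lor ∈ T ∧
      PT (PT Lor - projSet Ω (PT Lor)) = PT (M - projSet Ω M)) ∧
    -- ... and (L_oracle, S_oracle) solves the least squares problem
    ∀ Lor : Matrix (Fin n) (Fin n) ℝ, Lor ∈ T →
      PT (PT Lor - projSet Ω (PT Lor)) = PT (M - projSet Ω M) →
      ∀ Sor : Matrix (Fin n) (Fin n) ℝ, Sor = projSet Ω (M - Lor) →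
        ∀ L S : Matrix (Fin n) (Fin n) ℝ, L ∈ T → projSet Ω S = S →
          frobNorm (M - Lor - Sor) ≤ frobNorm (M - L - S) := by
  have hPTmem := hPT.1
  have hPTfix := hPT.2.1
  have hPTorth := hPT.2.2
  -- finner X Y = finner (PT X) Y for Y ∈ T
  have hproj : ∀ X Y, Y ∈ T → finner X Y = finner (PT X) Y := by
    intro X Y hY
    have h0 := hPTorth X Y hY
    rw [finner_sub_left] at h0
    linarith
  constructor
  · -- existence
    let Pm : Matrix (Fin n) (Fin n) ℝ →ₗ[ℝ] Matrix (Fin n) (Fin n) ℝ :=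
      { toFun := projSet Ω
        map_add' := projSet_add Ω
        map_smul' := projSet_smul Ω }
    let G : Matrix (Fin n) (Fin n) ℝ →ₗ[ℝ] Matrix (Fin n) (Fin n) ℝ :=
      PT ∘ₗ (LinearMap.id - Pm)
    have hGmem : ∀ x ∈ T, G x ∈ T := fun x _ => hPTmem _
    let F : T →ₗ[ℝ] T := G.restrict hGmem
    have hFinj : Function.Injective F := by
      rw [← LinearMap.ker_eq_bot, LinearMap.ker_eq_bot']
      intro x hx
      have hx1 : PT (x.1 - projSet Ω x.1) = 0 := congrArg Subtype.val hx
      set Qx := x.1 - projSet Ω x.1 with hQxdef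
      have hPQx : projSet Ω Qx = 0 := by
        rw [hQxdef, projSet_sub, projSet_idem, sub_self]
      have h1 : finner Qx x.1 = 0 := by
        rw [hproj Qx x.1 x.2, hx1, finner_zero_left]
      have h2 : finner Qx (projSet Ω x.1) = 0 := by
        rw [← projSet_adj, hPQx, finner_zero_left]
      have h3 : finner Qx Qx = 0 := by
        have : x.1 = Qx + projSet Ω x.1 := by rw [hQxdef]; abel
        rw [this, finner_comm, finner_add_left] at h1
        rw [finner_comm Qx (projSet Ω x.1)] at h2
        rw [finner_comm]
        linarith
      have hQ0 : Qx = 0 := eq_zero_of_finner_self _ h3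
      have hxeq : x.1 = projSet Ω x.1 := by
        have := sub_eq_zero.mp hQ0
        exact this
      have hnorm : frobNorm x.1 ≤ (1/2) * frobNorm x.1 := by
        have := hop x.1
        rwa [hPTfix x.1 x.2, ← hxeq] at this
      have hnn : 0 ≤ frobNorm x.1 := by rw [frobNorm_eq]; exact Real.sqrt_nonneg _
      have h0 : frobNorm x.1 = 0 := by linarith
      have hfin : finner x.1 x.1 = 0 := by
        rw [frobNorm_eq] at h0
        have := Real.sqrt_eq_zero (finner_self_nonneg x.1) |>.mp h0
        exact this
      exact Subtype.ext (eq_zero_of_finner_self _ hfin)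
    have hFsurj : Function.Surjective F :=
      (LinearMap.injective_iff_surjective).mp hFinj
    obtain ⟨y, hy⟩ := hFsurj ⟨PT (M - projSet Ω M), hPTmem _⟩
    refine ⟨y.1, y.2, ?_⟩
    have hy1 : PT (y.1 - projSet Ω y.1) = PT (M - projSet Ω M) := congrArg Subtype.val hy
    rw [hPTfix y.1 y.2]
    exact hy1
  · -- optimality
    intro Lor hLor hnorm Sor hSor L S hL hS
    set R := M - Lor - Sor with hRdef
    have hReq : R = (M - projSet Ω M) - (Lor - projSet Ω Lor) := by
      rw [hRdef, hSor, projSet_sub]; abel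
    have hPTR : PT R = 0 := by
      rw [hReq, map_sub, ← hnorm, hPTfix Lor hLor, sub_self]
    have hPΩR : projSet Ω R = 0 := by
      have : R = (M - Lor) - projSet Ω (M - Lor) := by rw [hRdef, hSor]
      rw [this, projSet_sub, projSet_idem, sub_self]
    -- R orthogonal to T
    have hRT : ∀ Y, Y ∈ T → finner R Y = 0 := by
      intro Y hY
      rw [hproj R Y hY, hPTR, finner_zero_left]
    -- R orthogonal to Ω-supported
    have hRΩ : ∀ W, finner R (projSet Ω W) = 0 := by
      intro W
      rw [← projSet_adj, hPΩR, finner_zero_left]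
    set K := (Lor - L) + (Sor - S) with hKdef
    have hMLS : M - L - S = R + K := by rw [hRdef, hKdef]; abel
    have hRK : finner R K = 0 := by
      have h1 : finner R (Lor - L) = 0 := hRT _ (T.sub_mem hLor hL)
      have h2 : finner R (Sor - S) = 0 := by
        have : Sor - S = projSet Ω ((M - Lor) - S) := by
          rw [projSet_sub, ← hSor, hS]
        rw [this]; exact hRΩ _
      rw [hKdef, finner_comm, finner_add_left, finner_comm (Lor - L) R,
        finner_comm (Sor - S) R, h1, h2, add_zero]
    have hexp : finner (M - L - S) (M - L - S) = finner R R + finner K K := by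
      rw [hMLS, finner_expand, hRK]; ring
    have hle : finner R R ≤ finner (M - L - S) (M - L - S) := by
      rw [hexp]
      have := finner_self_nonneg K
      linarith
    rw [frobNorm_eq, frobNorm_eq]
    exact Real.sqrt_le_sqrt hle
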